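/- Let C > 0 and let u : ℝ² → ℝ be a measurable function with u(x) ≥ 0 for all x and u(x) ≤ −(5/6)·log|x| + C for all x with 0 < |x| < 3. Let h : ℝ² → ℝ be measurable with 0 ≤ h ≤ 1, vanishing outside the closed unit ball, and with H := ∫_{ℝ²} h dy ≥ (10/11)·π. For 0 < t < 1 define the mollification u_t(x) = (1/(t²·H)) ∫_{ℝ²} h(y/t)·u(x−y) dy. Then there exists a constant C' > 0, depending only on C, such that u_t(x) ≤ −(11/12)·log|x| + C' for all 0 < t < 1 and all x with 0 < |x| < 2. -/

import Mathlib

open MeasureTheory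

namespace MollificationAux

open Metric Set

noncomputable def psi (z : EuclideanSpace ℝ (Fin 2)) : ℝ := max 0 (-Real.log ‖z‖)

lemma psi_nonneg (z : EuclideanSpace ℝ (Fin 2)) : 0 ≤ psi z := le_max_left _ _

lemma measurable_psi : Measurable psi :=
  measurable_const.max (Real.measurable_log.comp measurable_norm).neg

lemma volume_closedBall2 (x : EuclideanSpace ℝ (Fin 2)) {t : ℝ} (ht : 0 ≤ t) :
    volume (closedBall x t) = ENNReal.ofReal (Real.pi * t ^ 2) := by
  rw [EuclideanSpace.volume_closedBall]
  simp only [Fintype.card_fin]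
  rw [show ((2:ℕ):ℝ)/2 + 1 = 2 by norm_num, Real.Gamma_two,
    Real.sq_sqrt Real.pi_pos.le, ← ENNReal.ofReal_pow ht, ← ENNReal.ofReal_mul (by positivity)]
  ring_nf

lemma vol_unit_ball : (volume (ball (0 : EuclideanSpace ℝ (Fin 2)) 1)).toReal = Real.pi := by
  rw [EuclideanSpace.volume_ball]
  simp only [Fintype.card_fin]
  rw [show ((2:ℕ):ℝ)/2 + 1 = 2 by norm_num, Real.Gamma_two,
    Real.sq_sqrt Real.pi_pos.le]
  simp [ENNReal.toReal_ofReal Real.pi_pos.le]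

lemma volume_singleton (x : EuclideanSpace ℝ (Fin 2)) :
    volume ({x} : Set (EuclideanSpace ℝ (Fin 2))) = 0 := by
  have := volume_closedBall2 x (le_refl (0:ℝ))
  rw [closedBall_zero] at this
  simpa using this

lemma integrable_psi : Integrable psi (volume : Measure (EuclideanSpace ℝ (Fin 2))) := by
  refine ⟨measurable_psi.aestronglyMeasurable, ?_⟩
  rw [hasFiniteIntegral_iff_ofReal (Filter.Eventually.of_forall psi_nonneg)]
  rw [lintegral_eq_lintegral_meas_le volume (Filter.Eventually.of_forall psi_nonneg)
    measurable_psi.aemeasurable]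
  have hbd : ∀ s ∈ Ioi (0:ℝ),
      volume {a : EuclideanSpace ℝ (Fin 2) | s ≤ psi a}
        ≤ ENNReal.ofReal (Real.pi * Real.exp (-2 * s)) := by
    intro s hs
    have hsub : {a : EuclideanSpace ℝ (Fin 2) | s ≤ psi a}
        ⊆ closedBall 0 (Real.exp (-s)) := by
      intro a ha
      simp only [mem_setOf_eq, psi] at ha
      rcases eq_or_ne a 0 with rfl | ha0
      · simp [Real.exp_pos (-s) |>.le]
      · have hlog : s ≤ -Real.log ‖a‖ := by
          rcases le_or_gt (-Real.log ‖a‖) 0 with hle | hlt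
          · exfalso; rw [max_eq_left hle] at ha; exact absurd ha (not_le.2 hs)
          · rwa [max_eq_right hlt.le] at ha
        have : Real.log ‖a‖ ≤ -s := by linarith
        rw [mem_closedBall_zero_iff]
        calc ‖a‖ = Real.exp (Real.log ‖a‖) := (Real.exp_log (norm_pos_iff.2 ha0)).symm
          _ ≤ Real.exp (-s) := Real.exp_le_exp.2 this
    calc volume {a : EuclideanSpace ℝ (Fin 2) | s ≤ psi a}
        ≤ volume (closedBall (0 : EuclideanSpace ℝ (Fin 2)) (Real.exp (-s))) :=
          measure_mono hsub
      _ = ENNReal.ofReal (Real.pi * Real.exp (-s) ^ 2) :=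
          volume_closedBall2 _ (Real.exp_pos _).le
      _ = ENNReal.ofReal (Real.pi * Real.exp (-2 * s)) := by
          rw [sq, ← Real.exp_add]; ring_nf
  calc ∫⁻ s in Ioi (0:ℝ), volume {a : EuclideanSpace ℝ (Fin 2) | s ≤ psi a}
      ≤ ∫⁻ s in Ioi (0:ℝ), ENNReal.ofReal (Real.pi * Real.exp (-2 * s)) :=
        setLIntegral_mono' measurableSet_Ioi hbd
    _ < ⊤ := IntegrableOn.setLIntegral_lt_top
        ((exp_neg_integrableOn_Ioi 0 (by norm_num : (0:ℝ) < 2)).const_mul Real.pi)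

lemma rlog_integral {t : ℝ} (ht : 0 < t) :
    ∫ r in (0:ℝ)..t, r * (-Real.log r) = t ^ 2 / 4 - t ^ 2 / 2 * Real.log t := by
  have hF : (fun r : ℝ => r ^ 2 / 4 - r ^ 2 / 2 * Real.log r)
      = (fun r : ℝ => r ^ 2 / 4 + r / 2 * Real.negMulLog r) := by
    funext r; rw [Real.negMulLog]; ring
  have hcont : ContinuousOn (fun r : ℝ => r ^ 2 / 4 - r ^ 2 / 2 * Real.log r) (Icc 0 t) := by
    rw [hF]
    exact Continuous.continuousOn (by fun_prop)
  have hderiv : ∀ r ∈ Ioo (0:ℝ) t,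
      HasDerivWithinAt (fun r : ℝ => r ^ 2 / 4 - r ^ 2 / 2 * Real.log r)
        (r * (-Real.log r)) (Ioi r) r := by
    intro r hr
    have h1 : HasDerivAt (fun r : ℝ => r ^ 2 / 4) (r / 2) r := by
      have := (hasDerivAt_pow 2 r).div_const 4
      refine this.congr_deriv ?_
      norm_num; ring
    have h2 : HasDerivAt (fun r : ℝ => r ^ 2 / 2 * Real.log r)
        (r * Real.log r + r / 2) r := by
      have := ((hasDerivAt_pow 2 r).div_const 2).mul (Real.hasDerivAt_log hr.1.ne')
      refine this.congr_deriv ?_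
      field_simp [hr.1.ne']
      ring
    have h3 := h1.sub h2
    have h4 : r / 2 - (r * Real.log r + r / 2) = r * (-Real.log r) := by ring
    rw [h4] at h3
    exact h3.hasDerivWithinAt
  have hint : IntervalIntegrable (fun r : ℝ => r * (-Real.log r)) volume 0 t := by
    have h2 : Continuous (fun r : ℝ => r * (-Real.log r)) := by
      have : (fun r : ℝ => r * (-Real.log r)) = Real.negMulLog := by
        funext r; rw [Real.negMulLog]; ring
      rw [this]; exact Real.continuous_negMulLog
    exact h2.intervalIntegrable 0 t
  rw [intervalIntegral.integral_eq_sub_of_hasDeriv_right_of_le ht.le hcont hderiv hint]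
  simp

lemma setIntegral_psi_closedBall {t : ℝ} (ht : 0 < t) (ht1 : t ≤ 1) :
    ∫ z in closedBall (0 : EuclideanSpace ℝ (Fin 2)) t, psi z
      = Real.pi * t ^ 2 * (1 / 2 - Real.log t) := by
  have key : ∀ z : EuclideanSpace ℝ (Fin 2),
      (closedBall (0 : EuclideanSpace ℝ (Fin 2)) t).indicator psi z
        = (fun r : ℝ => if r ≤ t then max 0 (-Real.log r) else 0) ‖z‖ := by
    intro z
    by_cases hz : ‖z‖ ≤ t
    · rw [indicator_of_mem (mem_closedBall_zero_iff.2 hz)]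
      simp [psi, hz]
    · rw [indicator_of_notMem (fun hmem => hz (mem_closedBall_zero_iff.1 hmem))]
      simp [hz]
  rw [← integral_indicator measurableSet_closedBall]
  calc ∫ z, (closedBall (0 : EuclideanSpace ℝ (Fin 2)) t).indicator psi z
      = ∫ z : EuclideanSpace ℝ (Fin 2),
          (fun r : ℝ => if r ≤ t then max 0 (-Real.log r) else 0) ‖z‖ :=
        integral_congr_ae (Filter.Eventually.of_forall key)
    _ = (Module.finrank ℝ (EuclideanSpace ℝ (Fin 2)))
          • (volume (ball (0 : EuclideanSpace ℝ (Fin 2)) 1)).toReal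
          • ∫ r in Ioi (0:ℝ), r ^ (Module.finrank ℝ (EuclideanSpace ℝ (Fin 2)) - 1)
              • (fun r : ℝ => if r ≤ t then max 0 (-Real.log r) else 0) r :=
        integral_fun_norm_addHaar (volume : Measure (EuclideanSpace ℝ (Fin 2)))
          (fun r : ℝ => if r ≤ t then max 0 (-Real.log r) else 0)
    _ = Real.pi * t ^ 2 * (1 / 2 - Real.log t) := by
        rw [finrank_euclideanSpace_fin, vol_unit_ball]
        have congr1 : ∀ r ∈ Ioi (0:ℝ),
            r ^ (2 - 1) • (fun r : ℝ => if r ≤ t then max 0 (-Real.log r) else 0) r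
              = (Ioc (0:ℝ) t).indicator (fun r => r * (-Real.log r)) r := by
          intro r hr
          simp only [show (2 - 1 : ℕ) = 1 from rfl, pow_one, smul_eq_mul]
          by_cases hrt : r ≤ t
          · rw [if_pos hrt, indicator_of_mem (show r ∈ Ioc (0:ℝ) t from ⟨hr, hrt⟩)]
            rw [max_eq_right (by
              have : Real.log r ≤ 0 := Real.log_nonpos (le_of_lt hr) (hrt.trans ht1)
              linarith)]
          · rw [if_neg hrt, indicator_of_notMem (fun hmem => hrt hmem.2)]
            ring
        rw [setIntegral_congr_fun measurableSet_Ioi congr1,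
          setIntegral_indicator measurableSet_Ioc,
          inter_eq_self_of_subset_right Ioc_subset_Ioi_self,
          ← intervalIntegral.integral_of_le ht.le, rlog_integral ht]
        simp only [smul_eq_mul, nsmul_eq_mul]
        push_cast
        ring

lemma psi_ball_le {x : EuclideanSpace ℝ (Fin 2)} {t : ℝ} (ht : 0 < t) :
    ∫ z in closedBall x t, psi z ≤ ∫ z in closedBall (0 : EuclideanSpace ℝ (Fin 2)) t, psi z := by
  set A := closedBall x t with hA
  set B := closedBall (0 : EuclideanSpace ℝ (Fin 2)) t with hB
  set m := max 0 (-Real.log t) with hm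
  have hAmeas : MeasurableSet A := measurableSet_closedBall
  have hBmeas : MeasurableSet B := measurableSet_closedBall
  have hintA : IntegrableOn psi A volume := integrable_psi.integrableOn
  have hintB : IntegrableOn psi B volume := integrable_psi.integrableOn
  have hsplitA : (∫ z in A ∩ B, psi z) + (∫ z in A \ B, psi z) = ∫ z in A, psi z :=
    integral_inter_add_diff hBmeas hintA
  have hsplitB : (∫ z in B ∩ A, psi z) + (∫ z in B \ A, psi z) = ∫ z in B, psi z :=
    integral_inter_add_diff hAmeas hintB
  have hvol : volume (A \ B) = volume (B \ A) := by
    have h1 : volume (A \ B) = volume A - volume (A ∩ B) := by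
      rw [← Set.diff_self_inter]
      exact measure_diff Set.inter_subset_left (hAmeas.inter hBmeas).nullMeasurableSet
        (lt_of_le_of_lt (measure_mono Set.inter_subset_left) measure_closedBall_lt_top).ne
    have h2 : volume (B \ A) = volume B - volume (B ∩ A) := by
      rw [← Set.diff_self_inter]
      exact measure_diff Set.inter_subset_left (hBmeas.inter hAmeas).nullMeasurableSet
        (lt_of_le_of_lt (measure_mono Set.inter_subset_left) measure_closedBall_lt_top).ne
    rw [h1, h2, Set.inter_comm, volume_closedBall2 x ht.le, volume_closedBall2 0 ht.le]
  have hfin : volume (A \ B) < ⊤ :=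
    lt_of_le_of_lt (measure_mono Set.diff_subset) measure_closedBall_lt_top
  have hub : ∫ z in A \ B, psi z ≤ m * (volume (A \ B)).toReal := by
    have hle : ∀ z ∈ A \ B, psi z ≤ m := by
      intro z hz
      have hz2 : t < ‖z‖ := by
        have := hz.2
        rw [hB, mem_closedBall_zero_iff] at this
        exact lt_of_not_ge this
      have : -Real.log ‖z‖ ≤ -Real.log t :=
        neg_le_neg (Real.log_le_log ht hz2.le)
      exact max_le_max le_rfl this
    calc ∫ z in A \ B, psi z ≤ ∫ _z in A \ B, m := by
          refine setIntegral_mono_on (hintA.mono_set Set.diff_subset) ?_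
            (hAmeas.diff hBmeas) hle
          exact integrableOn_const hfin.ne
      _ = m * (volume (A \ B)).toReal := by
          rw [setIntegral_const, smul_eq_mul, mul_comm]; rfl
  have hlb : m * (volume (B \ A)).toReal ≤ ∫ z in B \ A, psi z := by
    have hset : ((B \ A) \ {0} : Set (EuclideanSpace ℝ (Fin 2))) =ᵐ[volume] (B \ A) := by
      refine MeasureTheory.diff_ae_eq_self.2 ?_
      exact measure_mono_null Set.inter_subset_right (volume_singleton 0)
    have hvol2 : volume ((B \ A) \ {0}) = volume (B \ A) := measure_congr hset
    have hle : ∀ z ∈ (B \ A) \ {0}, m ≤ psi z := by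
      intro z hz
      have hz0 : z ≠ 0 := hz.2
      have hzt : ‖z‖ ≤ t := mem_closedBall_zero_iff.1 hz.1.1
      have : -Real.log t ≤ -Real.log ‖z‖ :=
        neg_le_neg (Real.log_le_log (norm_pos_iff.2 hz0) hzt)
      exact max_le_max le_rfl this
    have hfin2 : volume ((B \ A) \ {0}) < ⊤ := by
      rw [hvol2]
      exact lt_of_le_of_lt (measure_mono Set.diff_subset) measure_closedBall_lt_top
    calc m * (volume (B \ A)).toReal
        = m * (volume ((B \ A) \ {0})).toReal := by rw [hvol2]
      _ = ∫ _z in (B \ A) \ {0}, m := by rw [setIntegral_const, smul_eq_mul, mul_comm]; rfl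
      _ ≤ ∫ z in (B \ A) \ {0}, psi z :=
          setIntegral_mono_on (integrableOn_const hfin2.ne)
            (hintB.mono_set (Set.diff_subset.trans Set.diff_subset))
            ((hBmeas.diff hAmeas).diff (measurableSet_singleton 0)) hle
      _ = ∫ z in B \ A, psi z := setIntegral_congr_set hset
  have hinter : ∫ z in A ∩ B, psi z = ∫ z in B ∩ A, psi z := by rw [Set.inter_comm]
  have hvolr : (volume (A \ B)).toReal = (volume (B \ A)).toReal := by rw [hvol]
  rw [hvolr] at hub
  linarith [hub, hlb, hsplitA, hsplitB]

end MollificationAux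

open MollificationAux Metric Set in
/-- **Mollification estimate near a log singularity.** Let `C > 0`. There is a constant
`C' > 0`, depending only on `C`, such that for any measurable `u : ℝ² → ℝ` with `u ≥ 0`
and `u(x) ≤ -(5/6)·log|x| + C` for `0 < |x| < 3`, and any measurable bump `h : ℝ² → ℝ`
with `0 ≤ h ≤ 1`, vanishing outside the closed unit ball, and total mass
`H = ∫ h ≥ (10/11)·π`, the mollification `u_t(x) = (1/(t²H)) ∫ h(y/t) u(x−y) dy`
satisfies `u_t(x) ≤ -(11/12)·log|x| + C'` for all `0 < t < 1` and `0 < |x| < 2`. -/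
theorem mollification_log_estimate (C : ℝ) (hC : 0 < C) :
    ∃ C' : ℝ, 0 < C' ∧
      ∀ u h : EuclideanSpace ℝ (Fin 2) → ℝ,
        Measurable u →
        (∀ x, 0 ≤ u x) →
        (∀ x, 0 < ‖x‖ → ‖x‖ < 3 → u x ≤ -(5 / 6) * Real.log ‖x‖ + C) →
        Measurable h →
        (∀ x, 0 ≤ h x) → (∀ x, h x ≤ 1) →
        (∀ x, 1 < ‖x‖ → h x = 0) →
        (10 / 11) * Real.pi ≤ ∫ y, h y →
        ∀ t : ℝ, 0 < t → t < 1 →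
          ∀ x : EuclideanSpace ℝ (Fin 2), 0 < ‖x‖ → ‖x‖ < 2 →
            (1 / (t ^ 2 * ∫ y, h y)) * (∫ y, h (t⁻¹ • y) * u (x - y))
              ≤ -(11 / 12) * Real.log ‖x‖ + C' := by
  refine ⟨2 * C + 2, by linarith, ?_⟩
  intro u h hu_meas hu_nonneg hu_bd hh_meas hh_nonneg hh_le hh_supp hH t ht ht1 x hx hx2
  have hπ := Real.pi_pos
  have hH0 : 0 < ∫ y, h y := lt_of_lt_of_le (by positivity) hH
  set H := ∫ y, h y with hHdef
  have htH : 0 < t ^ 2 * H := by positivity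
  have hlog2 : Real.log 2 < 0.6931471808 := Real.log_two_lt_d9
  have hsupp : ∀ y : EuclideanSpace ℝ (Fin 2), t < ‖y‖ → h (t⁻¹ • y) = 0 := by
    intro y hy
    apply hh_supp
    rw [norm_smul, Real.norm_eq_abs, abs_of_pos (inv_pos.2 ht)]
    calc (1:ℝ) = t⁻¹ * t := (inv_mul_cancel₀ ht.ne').symm
      _ < t⁻¹ * ‖y‖ := mul_lt_mul_of_pos_left hy (inv_pos.2 ht)
  have hf_nonneg : ∀ y, 0 ≤ h (t⁻¹ • y) * u (x - y) :=
    fun y => mul_nonneg (hh_nonneg _) (hu_nonneg _)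
  have hmeas_ht : Measurable (fun y : EuclideanSpace ℝ (Fin 2) => h (t⁻¹ • y)) :=
    hh_meas.comp (measurable_id.const_smul t⁻¹)
  have hint_ht : Integrable (fun y : EuclideanSpace ℝ (Fin 2) => h (t⁻¹ • y)) := by
    have hind : Integrable
        ((closedBall (0 : EuclideanSpace ℝ (Fin 2)) t).indicator (fun _ => (1:ℝ))) volume :=
      (integrable_indicator_iff measurableSet_closedBall).2
        (integrableOn_const measure_closedBall_lt_top.ne)
    refine Integrable.mono' hind
      hmeas_ht.aestronglyMeasurable (Filter.Eventually.of_forall ?_)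
    · intro y
      rw [Real.norm_eq_abs, abs_of_nonneg (hh_nonneg _)]
      by_cases hy : y ∈ closedBall (0 : EuclideanSpace ℝ (Fin 2)) t
      · rw [Set.indicator_of_mem hy]; exact hh_le _
      · rw [Set.indicator_of_notMem hy,
          hsupp y (lt_of_not_ge (fun hc => hy (mem_closedBall_zero_iff.2 hc)))]
  rcases le_or_gt (2 * t) ‖x‖ with hcase | hcase
  · -- far case : t ≤ ‖x‖/2
    set M := -(5/6) * Real.log (‖x‖ / 2) + C with hM
    have hfg : ∀ y, h (t⁻¹ • y) * u (x - y) ≤ h (t⁻¹ • y) * M := by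
      intro y
      rcases le_or_gt ‖y‖ t with hyt | hyt
      · have h1 : ‖x‖ / 2 ≤ ‖x - y‖ := by
          have h2 := norm_sub_norm_le x y
          linarith
        have h2 : ‖x - y‖ < 3 := lt_of_le_of_lt (norm_sub_le x y) (by linarith)
        have h3 : 0 < ‖x - y‖ := lt_of_lt_of_le (by linarith) h1
        have h4 := hu_bd (x - y) h3 h2
        have h5 : Real.log (‖x‖ / 2) ≤ Real.log ‖x - y‖ := Real.log_le_log (by linarith) h1
        have h6 : u (x - y) ≤ M := by rw [hM]; linarith
        exact mul_le_mul_of_nonneg_left h6 (hh_nonneg _)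
      · rw [hsupp y hyt]; simp
    have hint_g : Integrable (fun y : EuclideanSpace ℝ (Fin 2) => h (t⁻¹ • y) * M) :=
      hint_ht.mul_const M
    have hmono := integral_mono_of_nonneg (Filter.Eventually.of_forall hf_nonneg) hint_g
      (Filter.Eventually.of_forall hfg)
    have hval : (∫ y : EuclideanSpace ℝ (Fin 2), h (t⁻¹ • y) * M) = t ^ 2 * H * M := by
      rw [integral_mul_const, Measure.integral_comp_inv_smul_of_nonneg volume h ht.le,
        finrank_euclideanSpace_fin, smul_eq_mul, ← hHdef]
    have step : 1 / (t ^ 2 * H) * (∫ y, h (t⁻¹ • y) * u (x - y)) ≤ M := by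
      calc 1 / (t ^ 2 * H) * (∫ y, h (t⁻¹ • y) * u (x - y))
          ≤ 1 / (t ^ 2 * H) * (∫ y, h (t⁻¹ • y) * M) :=
            mul_le_mul_of_nonneg_left hmono (by positivity)
        _ = M := by rw [hval]; field_simp
    refine step.trans ?_
    have hlogx : Real.log ‖x‖ ≤ Real.log 2 := Real.log_le_log hx hx2.le
    rw [hM, Real.log_div hx.ne' two_ne_zero]
    linarith
  · -- near case : ‖x‖ < 2t
    set B := closedBall (0 : EuclideanSpace ℝ (Fin 2)) t with hBdef
    set g := fun y : EuclideanSpace ℝ (Fin 2) =>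
      B.indicator (fun y => C + 5/6 * psi (x - y)) y with hgdef
    have hint_psub : Integrable (fun y : EuclideanSpace ℝ (Fin 2) => psi (x - y)) :=
      integrable_psi.comp_sub_left x
    have hint_g : Integrable g := by
      refine (integrable_indicator_iff measurableSet_closedBall).2 ?_
      exact (integrableOn_const measure_closedBall_lt_top.ne).add
        ((hint_psub.const_mul (5/6)).integrableOn)
    have hne : ∀ᵐ y : EuclideanSpace ℝ (Fin 2), y ≠ x := by
      have hseteq : {y : EuclideanSpace ℝ (Fin 2) | ¬ y ≠ x} = {x} := by ext y; simp
      rw [ae_iff, hseteq]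
      exact volume_singleton x
    have hfg : ∀ᵐ y : EuclideanSpace ℝ (Fin 2), h (t⁻¹ • y) * u (x - y) ≤ g y := by
      filter_upwards [hne] with y hy
      by_cases hyB : y ∈ B
      · rw [hgdef]
        simp only [Set.indicator_of_mem hyB]
        have hyt : ‖y‖ ≤ t := mem_closedBall_zero_iff.1 hyB
        have hxy0 : x - y ≠ 0 := sub_ne_zero.2 (Ne.symm hy)
        have h3 : 0 < ‖x - y‖ := norm_pos_iff.2 hxy0
        have h2 : ‖x - y‖ < 3 := lt_of_le_of_lt (norm_sub_le x y) (by linarith)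
        have h4 := hu_bd (x - y) h3 h2
        have h5 : -Real.log ‖x - y‖ ≤ psi (x - y) := le_max_right _ _
        have h6 : h (t⁻¹ • y) * u (x - y) ≤ u (x - y) :=
          mul_le_of_le_one_left (hu_nonneg _) (hh_le _)
        linarith
      · rw [hgdef]
        simp only [Set.indicator_of_notMem hyB]
        rw [hsupp y (lt_of_not_ge (fun hc => hyB (mem_closedBall_zero_iff.2 hc))), zero_mul]
    have hmono := integral_mono_of_nonneg (Filter.Eventually.of_forall hf_nonneg) hint_g hfg
    have e3 : (∫ y in B, psi (x - y)) = ∫ z in closedBall x t, psi z := by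
      have key : ∀ y : EuclideanSpace ℝ (Fin 2),
          B.indicator (fun y => psi (x - y)) y
            = (closedBall x t).indicator psi (x - y) := by
        intro y
        have hmem : (x - y ∈ closedBall x t) ↔ y ∈ B := by
          rw [mem_closedBall_iff_norm, hBdef, mem_closedBall_zero_iff]
          constructor <;> intro hc <;> [skip; skip] <;>
            · simpa [norm_neg] using hc
        by_cases hy : y ∈ B
        · rw [Set.indicator_of_mem hy, Set.indicator_of_mem (hmem.2 hy)]
        · rw [Set.indicator_of_notMem hy,
            Set.indicator_of_notMem (fun hc => hy (hmem.1 hc))]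
      calc ∫ y in B, psi (x - y)
          = ∫ y, B.indicator (fun y => psi (x - y)) y :=
            (integral_indicator measurableSet_closedBall).symm
        _ = ∫ y, (closedBall x t).indicator psi (x - y) :=
            integral_congr_ae (Filter.Eventually.of_forall key)
        _ = ∫ z, (closedBall x t).indicator psi z :=
            integral_sub_left_eq_self ((closedBall x t).indicator psi) volume x
        _ = ∫ z in closedBall x t, psi z := integral_indicator measurableSet_closedBall
    have e2 : ∫ y, g y ≤ Real.pi * t ^ 2 * C
        + 5/6 * (Real.pi * t ^ 2 * (1/2 - Real.log t)) := by
      have hsplit : ∫ y, g y = (∫ _y in B, (C : ℝ)) + ∫ y in B, 5/6 * psi (x - y) := by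
        rw [hgdef, integral_indicator measurableSet_closedBall,
          integral_add (integrableOn_const (C := C) measure_closedBall_lt_top.ne)
            ((hint_psub.const_mul (5/6)).integrableOn)]
      rw [hsplit, setIntegral_const, measureReal_def, hBdef, volume_closedBall2 _ ht.le,
        ENNReal.toReal_ofReal (by positivity), smul_eq_mul, integral_const_mul]
      rw [← hBdef, e3]
      have hb1 := psi_ball_le (x := x) ht
      have hb2 := setIntegral_psi_closedBall ht ht1.le
      rw [hb2] at hb1
      nlinarith [hb1]
    have hPiH : Real.pi / H ≤ 11/10 := by
      rw [div_le_iff₀ hH0]; linarith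
    have hlogt : Real.log t ≤ 0 := Real.log_nonpos ht.le ht1.le
    have hlogxt : Real.log ‖x‖ - Real.log 2 ≤ Real.log t := by
      have hstep := Real.log_le_log (show (0:ℝ) < ‖x‖/2 by positivity)
        (show ‖x‖/2 ≤ t by linarith)
      rw [Real.log_div hx.ne' two_ne_zero] at hstep
      exact hstep
    calc 1 / (t ^ 2 * H) * (∫ y, h (t⁻¹ • y) * u (x - y))
        ≤ 1 / (t ^ 2 * H) * ∫ y, g y := mul_le_mul_of_nonneg_left hmono (by positivity)
      _ ≤ 1 / (t ^ 2 * H) * (Real.pi * t ^ 2 * C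
            + 5/6 * (Real.pi * t ^ 2 * (1/2 - Real.log t))) :=
          mul_le_mul_of_nonneg_left e2 (by positivity)
      _ = Real.pi / H * (C + 5/12 - 5/6 * Real.log t) := by
          field_simp
          ring
      _ ≤ 11/10 * (C + 5/12 - 5/6 * Real.log t) :=
          mul_le_mul_of_nonneg_right hPiH (by linarith)
      _ ≤ -(11 / 12) * Real.log ‖x‖ + (2 * C + 2) := by linarith
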